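/- Let F_• be an irredundant standard linear free complex over S = k[x_0,…,x_r] and let G_• be a minimal complex of finitely generated graded free S-modules. If α_• : F_• → G_• is a morphism of chain complexes of graded S-modules (all maps of degree zero) such that α_0 : F_0 → G_0 is a split monomorphism, then α_i : F_i → G_i is a split monomorphism for every i ≥ 0. -/

import Mathlib

open MvPolynomial

open Matrix
open MvPolynomial

private lemma Finsupp.degree_add' {σ : Type*} (d1 d2 : σ →₀ ℕ) :
    (d1 + d2).degree = d1.degree + d2.degree := by
  simp only [Finsupp.degree_eq_weight_one, map_add]

private lemma eq_C_of_isHomogeneous_zero {σ R : Type*} [CommRing R]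
    {p : MvPolynomial σ R} (hp : p.IsHomogeneous 0) :
    p = C (constantCoeff p) := by
  classical
  ext e
  rcases eq_or_ne e 0 with rfl | he
  · simp [← constantCoeff_eq]
  · rw [hp.coeff_eq_zero (by simpa [Finsupp.degree_eq_zero_iff] using he),
      coeff_C, if_neg (by exact fun h => he h.symm)]

private lemma low_mul_left {σ R : Type*} [CommRing R] {p q : MvPolynomial σ R}
    (hp : constantCoeff p = 0) (hq : constantCoeff q = 0)
    {d : σ →₀ ℕ} (hd : d.degree ≤ 1) : coeff d (p * q) = 0 := by
  classical
  rw [MvPolynomial.coeff_mul]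
  apply Finset.sum_eq_zero
  rintro ⟨d1, d2⟩ hmem
  rw [Finset.HasAntidiagonal.mem_antidiagonal] at hmem
  rcases eq_or_ne d1 0 with rfl | h
  · simp [← constantCoeff_eq, hp]
  · have hdeg : d1.degree + d2.degree ≤ 1 := by
      rw [← Finsupp.degree_add', hmem]; exact hd
    have h1 : 1 ≤ d1.degree := Nat.one_le_iff_ne_zero.mpr
      (fun hz => h ((Finsupp.degree_eq_zero_iff d1).mp hz))
    have : d2 = 0 := (Finsupp.degree_eq_zero_iff d2).mp (by omega)
    subst this
    simp [← constantCoeff_eq, hq]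

private lemma low_mul_right {σ R : Type*} [CommRing R] {p q : MvPolynomial σ R}
    (hq : ∀ d : σ →₀ ℕ, d.degree ≤ 1 → coeff d q = 0)
    {d : σ →₀ ℕ} (hd : d.degree ≤ 1) : coeff d (p * q) = 0 := by
  classical
  rw [MvPolynomial.coeff_mul]
  apply Finset.sum_eq_zero
  rintro ⟨d1, d2⟩ hmem
  rw [Finset.HasAntidiagonal.mem_antidiagonal] at hmem
  have hdeg : d1.degree + d2.degree ≤ 1 := by
    rw [← Finsupp.degree_add', hmem]; exact hd
  rw [hq d2 (by omega), mul_zero]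

private lemma exists_left_inverse_of_const_inj {k : Type} [Field k] {r m n : ℕ}
    (d : Fin m → ℤ) (top : ℤ)
    (A : Matrix (Fin m) (Fin n) (MvPolynomial (Fin (r + 1)) k))
    (hA : ∀ x y, (A x y).IsHomogeneous (top - d x).toNat ∧ (top - d x < 0 → A x y = 0))
    (hinj : ∀ v : Fin n → k,
      (Matrix.of fun x y => constantCoeff (A x y)) *ᵥ v = 0 → v = 0) :
    ∃ B : Matrix (Fin n) (Fin m) (MvPolynomial (Fin (r + 1)) k), B * A = 1 := by
  classical
  set Ab : Matrix (Fin m) (Fin n) k := Matrix.of fun x y => constantCoeff (A x y) with hAbdef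
  have hAb0 : ∀ x y, d x ≠ top → Ab x y = 0 := by
    intro x y hx
    rcases lt_trichotomy (top - d x) 0 with h | h | h
    · simp [hAbdef, (hA x y).2 h]
    · exact absurd (by omega : d x = top) hx
    · have hpos : (top - d x).toNat ≠ 0 := by omega
      have := (hA x y).1.coeff_eq_zero (d := 0) (by simpa using Ne.symm hpos)
      simpa [hAbdef, constantCoeff_eq] using this
  have hAconst : ∀ x y, d x = top → A x y = C (Ab x y) := by
    intro x y hx
    have h0 : (top - d x).toNat = 0 := by omega
    have := (hA x y).1
    rw [h0] at this
    exact eq_C_of_isHomogeneous_zero this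
  -- linear algebra over k
  set f : (Fin n → k) →ₗ[k] (Fin m → k) := Ab.mulVecLin with hf
  have hker : LinearMap.ker f = ⊥ := LinearMap.ker_eq_bot'.mpr (fun v hv => hinj v hv)
  obtain ⟨g, hg⟩ := f.exists_leftInverse_of_injective hker
  set proj : (Fin m → k) →ₗ[k] (Fin m → k) :=
    { toFun := fun w x => if d x = top then w x else 0
      map_add' := by intro w1 w2; funext x; by_cases h : d x = top <;> simp [h]
      map_smul' := by intro c w; funext x; by_cases h : d x = top <;> simp [h] } with hproj
  have hprojf : proj.comp f = f := by
    apply LinearMap.ext; intro v; funext x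
    by_cases h : d x = top
    · simp [hproj, h]
    · show (if d x = top then f v x else 0) = f v x
      rw [if_neg h]
      symm
      show (Ab *ᵥ v) x = 0
      simp only [Matrix.mulVec, dotProduct]
      exact Finset.sum_eq_zero fun y _ => by rw [hAb0 x y h, zero_mul]
  set B0 : Matrix (Fin n) (Fin m) k := LinearMap.toMatrix' (g ∘ₗ proj) with hB0def
  have hB0 : B0 * Ab = 1 := by
    have hAbm : Ab = LinearMap.toMatrix' f := by
      rw [hf, ← Matrix.toLin'_apply', LinearMap.toMatrix'_toLin']
    rw [hB0def, hAbm, ← LinearMap.toMatrix'_comp, LinearMap.comp_assoc, hprojf, hg,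
      LinearMap.toMatrix'_id]
  have hB0cols : ∀ x, d x ≠ top → ∀ y', B0 y' x = 0 := by
    intro x hx y'
    rw [hB0def, LinearMap.toMatrix'_apply]
    have : proj (fun j => if j = x then (1:k) else 0) = 0 := by
      funext j
      by_cases h : d j = top
      · have : j ≠ x := fun hj => hx (hj ▸ h)
        simp [hproj, h, this]
      · simp [hproj, h]
    simp [this]
    rw [show (Pi.single x (1:k) : Fin m → k) = fun j => if j = x then 1 else 0 from
      funext fun j => Pi.single_apply x 1 j, this]
    simp
  refine ⟨Matrix.of fun y x => C (B0 y x), Matrix.ext fun y y' => ?_⟩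
  rw [Matrix.mul_apply]
  have : ∀ x, (Matrix.of fun y x => C (B0 y x)) y x * A x y' = C (B0 y x * Ab x y') := by
    intro x
    simp only [Matrix.of_apply]
    by_cases h : d x = top
    · rw [hAconst x y' h, ← C_mul]
    · rw [hB0cols x h y, map_zero, zero_mul, zero_mul, map_zero]
  rw [Finset.sum_congr rfl fun x _ => this x, ← map_sum, ← Matrix.mul_apply, hB0]
  by_cases h : y = y' <;> simp [Matrix.one_apply, h]


/-- Let `S = k[x_0, …, x_r]`.  A standard linear free complex
`F_• = (S(-i)^(a i), M i)` is encoded by its differentials: matrices `M i` of linear forms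
with `M i * M (i+1) = 0`; it is irredundant if for each `i ≥ 0` the induced map
`F_{i+1}/mF_{i+1} → mF_i/m²F_i` is injective, i.e. `(M i) *ᵥ (constants v) = 0 → v = 0`.
A minimal complex `G_•` of f.g. graded free `S`-modules is encoded by ranks `b i`,
generator degrees `degG i`, and differentials `N i` whose entries are homogeneous of the
appropriate degrees and lie in the irrelevant maximal ideal (zero constant coefficient).
A morphism `α_• : F_• → G_•` of chain complexes of graded `S`-modules is encoded by
matrices `A i` of homogeneous entries of the appropriate degrees with
`A i * M i = N i * A (i+1)`.  If `α_0` is a split monomorphism (its matrix has a left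
inverse), then every `α_i` is a split monomorphism. -/
theorem irredundant_linear_complex_splits_into_minimal_complex
    (k : Type) [Field k] (r : ℕ)
    -- the irredundant standard linear free complex F
    (a : ℕ → ℕ)
    (M : ∀ i : ℕ, Matrix (Fin (a i)) (Fin (a (i + 1))) (MvPolynomial (Fin (r + 1)) k))
    (hMlin : ∀ (i : ℕ) (x : Fin (a i)) (y : Fin (a (i + 1))), (M i x y).IsHomogeneous 1)
    (hMcx : ∀ i : ℕ, M i * M (i + 1) = 0)
    (hirr : ∀ (i : ℕ) (v : Fin (a (i + 1)) → k),
      (M i).mulVec (fun j => C (v j)) = 0 → v = 0)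
    -- the minimal complex G of finitely generated graded free S-modules
    (b : ℕ → ℕ) (degG : ∀ i : ℕ, Fin (b i) → ℤ)
    (N : ∀ i : ℕ, Matrix (Fin (b i)) (Fin (b (i + 1))) (MvPolynomial (Fin (r + 1)) k))
    (hNhom : ∀ (i : ℕ) (x : Fin (b i)) (y : Fin (b (i + 1))),
      (N i x y).IsHomogeneous (degG (i + 1) y - degG i x).toNat
        ∧ (degG (i + 1) y - degG i x < 0 → N i x y = 0))
    (hNmin : ∀ (i : ℕ) (x : Fin (b i)) (y : Fin (b (i + 1))), constantCoeff (N i x y) = 0)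
    (hNcx : ∀ i : ℕ, N i * N (i + 1) = 0)
    -- the morphism of chain complexes of graded S-modules α : F → G
    (A : ∀ i : ℕ, Matrix (Fin (b i)) (Fin (a i)) (MvPolynomial (Fin (r + 1)) k))
    (hAhom : ∀ (i : ℕ) (x : Fin (b i)) (y : Fin (a i)),
      (A i x y).IsHomogeneous ((i : ℤ) - degG i x).toNat
        ∧ ((i : ℤ) - degG i x < 0 → A i x y = 0))
    (hchain : ∀ i : ℕ, A i * M i = N i * A (i + 1))
    -- α_0 is a split monomorphism
    (hsplit0 : ∃ B : Matrix (Fin (a 0)) (Fin (b 0)) (MvPolynomial (Fin (r + 1)) k),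
      B * A 0 = 1) :
    -- then every α_i is a split monomorphism
    ∀ i : ℕ, ∃ B : Matrix (Fin (a i)) (Fin (b i)) (MvPolynomial (Fin (r + 1)) k),
      B * A i = 1 := by
  intro i
  induction i with
  | zero => exact hsplit0
  | succ i ih =>
    obtain ⟨B, hB⟩ := ih
    refine exists_left_inverse_of_const_inj (degG (i + 1)) (((i + 1 : ℕ) : ℤ)) (A (i + 1))
      (hAhom (i + 1)) ?_
    intro v hv
    set u : Fin (b (i + 1)) → MvPolynomial (Fin (r + 1)) k :=
      (A (i + 1)).mulVec (fun j => C (v j)) with hu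
    have hu0 : ∀ x, constantCoeff (u x) = 0 := by
      intro x
      have hx := congrFun hv x
      simp only [Matrix.mulVec, dotProduct, Matrix.of_apply, Pi.zero_apply] at hx
      simp only [hu, Matrix.mulVec, dotProduct, map_sum, _root_.map_mul,
        constantCoeff_C]
      exact hx
    have hwlow : ∀ x (e : Fin (r + 1) →₀ ℕ), e.degree ≤ 1 →
        coeff e (((N i).mulVec u) x) = 0 := by
      intro x e he
      simp only [Matrix.mulVec, dotProduct]
      rw [MvPolynomial.coeff_sum]
      exact Finset.sum_eq_zero fun z _ => low_mul_left (hNmin i x z) (hu0 z) he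
    set L : Fin (a i) → MvPolynomial (Fin (r + 1)) k :=
      (M i).mulVec (fun j => C (v j)) with hL
    have hLw : (A i).mulVec L = (N i).mulVec u := by
      rw [hL, hu, Matrix.mulVec_mulVec, hchain i, ← Matrix.mulVec_mulVec]
    have hLB : L = B.mulVec ((N i).mulVec u) := by
      rw [← hLw, Matrix.mulVec_mulVec, hB, Matrix.one_mulVec]
    have hLlow : ∀ x (e : Fin (r + 1) →₀ ℕ), e.degree ≤ 1 → coeff e (L x) = 0 := by
      intro x e he
      rw [hLB]
      simp only [Matrix.mulVec, dotProduct]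
      rw [MvPolynomial.coeff_sum]
      exact Finset.sum_eq_zero fun z _ => low_mul_right (fun d hd => hwlow z d hd) he
    have hLhom : ∀ x, (L x).IsHomogeneous 1 := by
      intro x
      rw [hL]
      simp only [Matrix.mulVec, dotProduct]
      exact MvPolynomial.IsHomogeneous.sum _ _ _
        (fun y _ => by simpa using (hMlin i x y).mul (isHomogeneous_C _ (v y)))
    have hL0 : (M i).mulVec (fun j => C (v j)) = 0 := by
      rw [← hL]
      funext x
      ext e
      rcases eq_or_ne e.degree 1 with he | he
      · rw [hLlow x e he.le]; simp
      · rw [(hLhom x).coeff_eq_zero he]; simp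
    exact hirr i v hL0
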